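/- The average-vector-field scheme SE2-TSI, U^{n+1} = e^{−h∂_τ/ε}U^n + hφ₁(−h∂_τ/ε)∫₀¹ f((1−ρ)U^n + ρU^{n+1})dρ, is time-symmetric: replacing (U^n, U^{n+1}, h) by (U^{n+1}, U^n, −h) gives an equivalent equation. -/

import Mathlib

noncomputable def phi1 (z : ℂ) : ℂ := if z = 0 then 1 else (Complex.exp z - 1) / z

lemma phi1_key (z : ℂ) : Complex.exp z * phi1 (-z) = phi1 z := by
  unfold phi1
  by_cases hz : z = 0
  · simp [hz]
  · have hz' : -z ≠ 0 := neg_ne_zero.mpr hz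
    rw [if_neg hz', if_neg hz]
    have hE : Complex.exp z * Complex.exp (-z) = 1 := by
      rw [← Complex.exp_add]; simp
    field_simp
    linear_combination (-1 : ℂ) * hE

/-- Time symmetry of the SE2-TSI (average-vector-field) scheme on a single Fourier
mode with purely imaginary symbol `z`. -/
theorem SE2TSI_time_symmetric (z : ℂ) (hz : z.re = 0) (h : ℂ) (f : ℂ → ℂ)
    (hf : Continuous f) (A B : ℂ) :
    B = Complex.exp (-z) * A +
        h * phi1 (-z) * ∫ ρ in (0:ℝ)..1, f ((1 - ρ) * A + ρ * B) ↔
      A = Complex.exp z * B -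
        h * phi1 z * ∫ ρ in (0:ℝ)..1, f ((1 - ρ) * B + ρ * A) := by
  have hE : Complex.exp z * Complex.exp (-z) = 1 := by
    rw [← Complex.exp_add]; simp
  have key := phi1_key z
  have hI : (∫ ρ in (0:ℝ)..1, f ((1 - ρ) * B + ρ * A))
      = ∫ ρ in (0:ℝ)..1, f ((1 - ρ) * A + ρ * B) := by
    have h1 := intervalIntegral.integral_comp_sub_left
      (a := (0:ℝ)) (b := 1) (fun ρ : ℝ => f ((1 - (ρ:ℂ)) * A + ρ * B)) 1
    simp only [sub_zero, sub_self] at h1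
    rw [← h1]
    apply intervalIntegral.integral_congr
    intro x _
    push_cast
    ring_nf
  rw [hI]
  set I := ∫ ρ in (0:ℝ)..1, f ((1 - ρ) * A + ρ * B) with hIdef
  constructor
  · intro hB
    rw [hB]
    linear_combination (-A) * hE + (-(h * I)) * key
  · intro hA
    rw [hA]
    linear_combination (-B + h * phi1 (-z) * I) * hE + (-(h * Complex.exp (-z) * I)) * key
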